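/- Let 0 ≤ t_V and 0 < t_D, and let q_1, …, q_n ∈ [0,1] with q_1 ≤ q_2 ≤ … ≤ q_n (rejection probabilities sorted increasingly, i.e., acceptance probabilities p_i = 1 − q_i sorted decreasingly). Let k be the number of indices i with p_i > t_V / t_D. Then for every m ∈ {0, …, n} and every sequence (q_{i_1}, …, q_{i_m}) with pairwise distinct indices i_1, …, i_m ∈ {1, …, n}, one has T(q_1, …, q_k) ≤ T(q_{i_1}, …, q_{i_m}). That is, the strategy that verifies exactly the boxes whose acceptance probability exceeds t_V / t_D, in decreasing order of acceptance probability, followed by manual drawing if all are rejected, minimizes the expected annotation time over all planned strategies V^m D applied to any sequence of distinct boxes. -/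

import Mathlib

/-- Expected episode duration: `expDur tV tD [q₁, …, qₘ]` is the expected annotation time of
the strategy `VᵐD` that verifies boxes with rejection probabilities `q₁, …, qₘ` in order
(each verification taking time `tV`) and draws manually (taking time `tD`) if all are
rejected: `expDur tV tD [] = tD` and `expDur tV tD (q :: qs) = tV + q * expDur tV tD qs`. -/
noncomputable def expDur (tV tD : ℝ) : List ℝ → ℝ
  | [] => tD
  | q :: qs => tV + q * expDur tV tD qs

namespace IADAux

lemma expDur_nonneg {tV tD : ℝ} (htV : 0 ≤ tV) (htD : 0 ≤ tD) :
    ∀ L : List ℝ, (∀ x ∈ L, 0 ≤ x) → 0 ≤ expDur tV tD L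
  | [], _ => htD
  | a :: L, h => by
      have h1 := expDur_nonneg htV htD L (fun x hx => h x (List.mem_cons_of_mem _ hx))
      have ha := h a (List.mem_cons_self)
      simpa [expDur] using add_nonneg htV (mul_nonneg ha h1)

lemma expDur_append (tV tD : ℝ) :
    ∀ L M : List ℝ, expDur tV tD (L ++ M) = expDur tV (expDur tV tD M) L
  | [], M => rfl
  | a :: L, M => by simp [expDur, expDur_append tV tD L M]

lemma expDur_base_mono {tV x y : ℝ} (hxy : x ≤ y) :
    ∀ L : List ℝ, (∀ a ∈ L, 0 ≤ a) → expDur tV x L ≤ expDur tV y L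
  | [], _ => hxy
  | a :: L, h => by
      have h1 := expDur_base_mono (tV := tV) hxy L (fun b hb => h b (List.mem_cons_of_mem _ hb))
      have ha := h a (List.mem_cons_self)
      simp only [expDur]
      exact add_le_add_right (mul_le_mul_of_nonneg_left h1 ha) _

lemma expDur_pointwise_mono {tV tD : ℝ} (htV : 0 ≤ tV) (htD : 0 ≤ tD) :
    ∀ {L M : List ℝ}, List.Forall₂ (· ≤ ·) L M → (∀ a ∈ L, 0 ≤ a) → (∀ b ∈ M, 0 ≤ b) →
      expDur tV tD L ≤ expDur tV tD M
  | [], [], _, _, _ => le_refl _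
  | a :: L, b :: M, h, hL, hM => by
      have hab : a ≤ b := (List.forall₂_cons.mp h).1
      have hLM := (List.forall₂_cons.mp h).2
      have ih := expDur_pointwise_mono htV htD hLM
        (fun x hx => hL x (List.mem_cons_of_mem _ hx))
        (fun x hx => hM x (List.mem_cons_of_mem _ hx))
      have hMnn := expDur_nonneg htV htD M (fun x hx => hM x (List.mem_cons_of_mem _ hx))
      have ha := hL a (List.mem_cons_self)
      simp only [expDur]
      have : a * expDur tV tD L ≤ b * expDur tV tD M :=
        mul_le_mul hab ih (expDur_nonneg htV htD L
          (fun x hx => hL x (List.mem_cons_of_mem _ hx))) (le_trans ha hab)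
      linarith

lemma expDur_orderedInsert {tV tD : ℝ} (htV : 0 ≤ tV) (htD : 0 ≤ tD) (a : ℝ) :
    ∀ M : List ℝ, (∀ x ∈ M, 0 ≤ x) →
      expDur tV tD (M.orderedInsert (· ≤ ·) a) ≤ expDur tV tD (a :: M)
  | [], _ => le_refl _
  | b :: M, h => by
      simp only [List.orderedInsert]
      by_cases hab : a ≤ b
      · simp [hab]
      · simp only [hab, if_false]
        have hb := h b (List.mem_cons_self)
        have hM : ∀ x ∈ M, 0 ≤ x := fun x hx => h x (List.mem_cons_of_mem _ hx)
        have ih := expDur_orderedInsert htV htD a M hM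
        have hMnn := expDur_nonneg htV htD M hM
        have hba : b ≤ a := le_of_not_ge hab
        calc expDur tV tD (b :: M.orderedInsert (· ≤ ·) a)
            = tV + b * expDur tV tD (M.orderedInsert (· ≤ ·) a) := rfl
          _ ≤ tV + b * expDur tV tD (a :: M) :=
              add_le_add_right (mul_le_mul_of_nonneg_left ih hb) _
          _ = tV + b * (tV + a * expDur tV tD M) := rfl
          _ ≤ tV + a * (tV + b * expDur tV tD M) := by nlinarith
          _ = expDur tV tD (a :: b :: M) := rfl

lemma expDur_insertionSort {tV tD : ℝ} (htV : 0 ≤ tV) (htD : 0 ≤ tD) :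
    ∀ L : List ℝ, (∀ x ∈ L, 0 ≤ x) →
      expDur tV tD (L.insertionSort (· ≤ ·)) ≤ expDur tV tD L
  | [], _ => le_refl _
  | a :: L, h => by
      have hL : ∀ x ∈ L, 0 ≤ x := fun x hx => h x (List.mem_cons_of_mem _ hx)
      have ha := h a (List.mem_cons_self)
      have ih := expDur_insertionSort htV htD L hL
      have hsortnn : ∀ x ∈ L.insertionSort (· ≤ ·), 0 ≤ x := fun x hx =>
        hL x ((List.perm_insertionSort _ L).mem_iff.mp hx)
      calc expDur tV tD ((a :: L).insertionSort (· ≤ ·))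
          = expDur tV tD ((L.insertionSort (· ≤ ·)).orderedInsert (· ≤ ·) a) := rfl
        _ ≤ expDur tV tD (a :: L.insertionSort (· ≤ ·)) :=
            expDur_orderedInsert htV htD a _ hsortnn
        _ = tV + a * expDur tV tD (L.insertionSort (· ≤ ·)) := rfl
        _ ≤ tV + a * expDur tV tD L := add_le_add_right (mul_le_mul_of_nonneg_left ih ha) _
        _ = expDur tV tD (a :: L) := rfl

lemma expDur_ge_base {tV tD : ℝ} :
    ∀ L : List ℝ, (∀ a ∈ L, 0 ≤ a ∧ tD ≤ tV + a * tD) → tD ≤ expDur tV tD L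
  | [], _ => le_refl _
  | a :: L, h => by
      have ih := expDur_ge_base L (fun x hx => h x (List.mem_cons_of_mem _ hx))
      obtain ⟨ha, hab⟩ := h a (List.mem_cons_self)
      calc tD ≤ tV + a * tD := hab
        _ ≤ tV + a * expDur tV tD L := add_le_add_right (mul_le_mul_of_nonneg_left ih ha) _
        _ = expDur tV tD (a :: L) := rfl

/-- Strictly increasing list of naturals with entries ≥ `c`: the `i`-th entry is ≥ `c + i`. -/
lemma sorted_lt_nat_get_aux :
    ∀ (I : List ℕ), I.Pairwise (· < ·) → ∀ c : ℕ, (∀ x ∈ I, c ≤ x) →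
      ∀ i (h : i < I.length), c + i ≤ I.get ⟨i, h⟩
  | [], _, _, _, i, h => by simp at h
  | a :: L, hI, c, hc, i, h => by
      cases i with
      | zero => simpa using hc a (List.mem_cons_self)
      | succ j =>
          have hL : L.Pairwise (· < ·) := hI.of_cons
          have hj : j < L.length := Nat.lt_of_succ_lt_succ h
          have hca : c ≤ a := hc a (List.mem_cons_self)
          have hc1 : ∀ x ∈ L, c + 1 ≤ x := fun x hx =>
            Nat.succ_le_of_lt (lt_of_le_of_lt hca (List.rel_of_pairwise_cons hI hx))
          have h1 := sorted_lt_nat_get_aux L hL (c + 1) hc1 j hj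
          have h2 : (a :: L).get ⟨j + 1, h⟩ = L.get ⟨j, hj⟩ := rfl
          rw [h2]
          omega

lemma sorted_lt_nat_get (I : List ℕ) (hI : I.Pairwise (· < ·)) :
    ∀ i (h : i < I.length), i ≤ I.get ⟨i, h⟩ := fun i h => by
  simpa using sorted_lt_nat_get_aux I hI 0 (fun _ _ => Nat.zero_le _) i h

end IADAux

open IADAux

/-- Theorem 1 (optimality of IAD-Prob): with rejection probabilities sorted increasingly and
`k` the number of boxes whose acceptance probability exceeds `t_V / t_D`, verifying exactly
those `k` boxes in decreasing order of acceptance probability (followed by drawing)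
minimizes the expected annotation time over all strategies `VᵐD` applied to any sequence
of distinct boxes. -/
theorem iadProb_optimal (tV tD : ℝ) (htV : 0 ≤ tV) (htD : 0 < tD)
    (n : ℕ) (q : ℕ → ℝ)
    (hq : ∀ i < n, 0 ≤ q i ∧ q i ≤ 1)
    (hsorted : ∀ i j, i ≤ j → j < n → q i ≤ q j)
    (k : ℕ) (hk : k = ((Finset.range n).filter fun i => tV / tD < 1 - q i).card)
    (m : ℕ) (hm : m ≤ n)
    (idx : Fin m → ℕ) (hinj : Function.Injective idx) (hidx : ∀ j, idx j < n) :
    expDur tV tD ((List.range k).map q)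
      ≤ expDur tV tD (List.ofFn fun j => q (idx j)) := by
  classical
  set F : Finset ℕ := (Finset.range n).filter fun i => tV / tD < 1 - q i with hF
  -- `F` is downward closed, so it equals `range k`
  have hdc : ∀ i j, i ≤ j → j ∈ F → i ∈ F := by
    intro i j hij hjF
    simp only [hF, Finset.mem_filter, Finset.mem_range] at hjF ⊢
    exact ⟨lt_of_le_of_lt hij hjF.1, lt_of_lt_of_le hjF.2
      (by linarith [hsorted i j hij hjF.1])⟩
  have hkn : k ≤ n := by
    rw [hk]
    calc F.card ≤ (Finset.range n).card := Finset.card_le_card (Finset.filter_subset _ _)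
      _ = n := Finset.card_range n
  have hmemF : ∀ i < n, (i ∈ F ↔ i < k) := by
    intro i hin
    constructor
    · intro hiF
      have hsub : Finset.range (i + 1) ⊆ F := by
        intro j hj
        exact hdc j i (Nat.lt_succ_iff.mp (Finset.mem_range.mp hj)) hiF
      have := Finset.card_le_card hsub
      rw [Finset.card_range] at this
      omega
      -- k = F.card ≥ i+1
    · intro hik
      by_contra hiF
      have hsub : F ⊆ Finset.range i := by
        intro j hjF
        rw [Finset.mem_range]
        by_contra hji
        exact hiF (hdc i j (le_of_not_gt hji) hjF)
      have := Finset.card_le_card hsub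
      rw [Finset.card_range] at this
      omega
  -- Basic numeric consequences of the filter characterization
  have hq_nn : ∀ i < n, 0 ≤ q i := fun i hi => (hq i hi).1
  have hgood : ∀ j < k, tV + q j * tD ≤ tD := by
    intro j hjk
    have hjn : j < n := lt_of_lt_of_le hjk hkn
    have hjF : j ∈ F := (hmemF j hjn).mpr hjk
    simp only [hF, Finset.mem_filter] at hjF
    have := (div_lt_iff₀ htD).mp hjF.2
    nlinarith
  have hbad : ∀ j, k ≤ j → j < n → tD ≤ tV + q j * tD := by
    intro j hkj hjn
    have hjF : j ∉ F := fun h => absurd ((hmemF j hjn).mp h) (not_lt.mpr hkj)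
    simp only [hF, Finset.mem_filter, Finset.mem_range] at hjF
    push_neg at hjF
    have h1 : 1 - q j ≤ tV / tD := hjF hjn
    have h2 : (1 - q j) * tD ≤ tV := (le_div_iff₀ htD).mp h1
    nlinarith
  -- Step 1 : `T (range k) ≤ T (range j)` for `j ≤ k`
  have step1 : ∀ d j, j + d = k →
      expDur tV tD ((List.range k).map q) ≤ expDur tV tD ((List.range j).map q) := by
    intro d
    induction d with
    | zero => intro j hj; rw [show j = k by omega]
    | succ d ih =>
        intro j hj
        have hjk : j < k := by omega
        have hjn : j < n := lt_of_lt_of_le hjk hkn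
        have hstep : expDur tV tD ((List.range (j + 1)).map q)
            ≤ expDur tV tD ((List.range j).map q) := by
          rw [List.range_succ, List.map_append, expDur_append]
          have hbase : expDur tV (expDur tV tD ([j].map q)) ((List.range j).map q)
              ≤ expDur tV tD ((List.range j).map q) := by
            apply expDur_base_mono
            · have : expDur tV tD ([j].map q) = tV + q j * tD := by simp [expDur]
              rw [this]; exact hgood j hjk
            · intro a ha
              simp only [List.mem_map, List.mem_range] at ha
              obtain ⟨i, hi, rfl⟩ := ha
              exact hq_nn i (lt_of_lt_of_le (lt_of_lt_of_le hi hjk.le) hkn)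
          exact hbase
        exact le_trans (ih (j + 1) (by omega)) hstep
  -- Step 2 : `T (range k) ≤ T (range m')` for `k ≤ m' ≤ n`
  have step2 : ∀ m', k ≤ m' → m' ≤ n →
      expDur tV tD ((List.range k).map q) ≤ expDur tV tD ((List.range m').map q) := by
    intro m' hkm hmn'
    rw [show m' = k + (m' - k) by omega, List.range_add, List.map_append, expDur_append]
    apply expDur_base_mono
    · apply expDur_ge_base (tV := tV)
      intro a ha
      simp only [List.map_map, List.mem_map, List.mem_range, Function.comp] at ha
      obtain ⟨i, hi, rfl⟩ := ha
      have h1 : k + i < n := by omega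
      exact ⟨hq_nn _ h1, hbad (k + i) (Nat.le_add_right _ _) h1⟩
    · intro a ha
      simp only [List.mem_map, List.mem_range] at ha
      obtain ⟨i, hi, rfl⟩ := ha
      exact hq_nn i (lt_of_lt_of_le hi hkn)
  have hrangek : ∀ m', m' ≤ n →
      expDur tV tD ((List.range k).map q) ≤ expDur tV tD ((List.range m').map q) := by
    intro m' hmn'
    rcases le_or_gt m' k with h | h
    · exact step1 (k - m') m' (by omega)
    · exact step2 m' h.le hmn'
  -- Step 3 : sort the chosen indices
  set s : Finset ℕ := Finset.univ.image idx with hs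
  have hscard : s.card = m := by
    rw [hs, Finset.card_image_of_injective _ hinj, Finset.card_univ, Fintype.card_fin]
  set I : List ℕ := s.sort (· ≤ ·) with hI
  have hIlen : I.length = m := by rw [hI, Finset.length_sort, hscard]
  have hIsorted : I.Pairwise (· < ·) := (Finset.sortedLT_sort s).pairwise
  have hImem : ∀ x ∈ I, x < n := by
    intro x hx
    rw [hI, Finset.mem_sort, hs, Finset.mem_image] at hx
    obtain ⟨j, _, rfl⟩ := hx
    exact hidx j
  -- `I.map q` is a sorted permutation of the chosen list
  have hperm : (I.map q).Perm (List.ofFn fun j => q (idx j)) := by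
    have h1 : (List.ofFn fun j => q (idx j)) = (List.ofFn idx).map q := by
      rw [List.map_ofFn]; rfl
    rw [h1]
    apply List.Perm.map
    rw [List.perm_ext_iff_of_nodup (Finset.sort_nodup _ _) (List.nodup_ofFn.mpr hinj)]
    intro a
    rw [Finset.mem_sort, hs, Finset.mem_image, List.mem_ofFn]
    simp [Set.mem_range]
  have hMsorted : (I.map q).Pairwise (· ≤ ·) := by
    rw [List.pairwise_map]
    apply hIsorted.imp_of_mem
    intro a b ha hb hab
    exact hsorted a b hab.le (hImem b hb)
  -- nonnegativity of the lists involved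
  have hVnn : ∀ x ∈ (List.ofFn fun j => q (idx j)), 0 ≤ x := by
    intro x hx
    rw [List.mem_ofFn] at hx
    obtain ⟨j, rfl⟩ := hx
    exact hq_nn _ (hidx j)
  have hMnn : ∀ x ∈ I.map q, 0 ≤ x := fun x hx => hperm.mem_iff.mp hx |> hVnn x
  -- `T (I.map q) ≤ T V` via insertion sort
  have hsortle : expDur tV tD (I.map q) ≤ expDur tV tD (List.ofFn fun j => q (idx j)) := by
    have heq : I.map q = (List.ofFn fun j => q (idx j)).insertionSort (· ≤ ·) := by
      apply List.Perm.eq_of_pairwise' hMsorted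
        (List.pairwise_insertionSort _ _)
        (hperm.trans (List.perm_insertionSort _ _).symm)
    rw [heq]
    exact expDur_insertionSort htV htD.le _ hVnn
  -- pointwise comparison `T (range m) ≤ T (I.map q)`
  have hpt : expDur tV tD ((List.range m).map q) ≤ expDur tV tD (I.map q) := by
    apply expDur_pointwise_mono htV htD.le _ _ hMnn
    · rw [List.forall₂_iff_get]
      constructor
      · simp [hIlen]
      · intro i h1 h2
        have h1' : i < m := by simpa using h1
        have h2' : i < I.length := by simpa using h2
        simp only [List.get_eq_getElem, List.getElem_map, List.getElem_range]
        have hle : i ≤ I.get ⟨i, h2'⟩ := sorted_lt_nat_get I hIsorted i h2'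
        exact hsorted i _ hle (hImem _ (I.get_mem _))
    · intro x hx
      simp only [List.mem_map, List.mem_range] at hx
      obtain ⟨i, hi, rfl⟩ := hx
      exact hq_nn i (lt_of_lt_of_le hi hm)
  exact le_trans (hrangek m hm) (le_trans hpt hsortle)
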